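/- arXiv:0804.2208 — 2 statements merged into one kernel-verified Lean document; each statement's English description precedes it below -/
import Mathlib

section
/- Let $I : \mathbb{R} \to [0,\infty]$ be convex, non-increasing, lower semicontinuous, with $I(\tau) = +\infty$ for $\tau < \tau^{\min}$, $I$ finite on $(\tau^{\min},\infty)$, and $I(\tau) = 0$ exactly for $\tau \ge \tilde\tau^q$. Let $\tau^{\lambda} = \inf_{\tau} \{\lambda\tau + I(\tau)\}$. Then $\tau^{\lambda}/\lambda \to \tilde\tau^q$ as $\lambda \to 0^+$ and $\tau^{\lambda}/\lambda \to \tau^{\min}$ as $\lambda \to +\infty$. -/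
open Filter

/-- Asymptotics of the Legendre transform `τ^λ = inf_τ {λτ + I(τ)}` of the rate
function `I`: `τ^λ/λ → τ̃q` as `λ → 0⁺` and `τ^λ/λ → τmin` as `λ → +∞`, where
`I = +∞` below `τmin`, `I` is finite on `(τmin,∞)`, and `I` vanishes exactly
on `[τ̃q, ∞)`. -/
theorem stmt2 (I : ℝ → EReal) (τmin τq : ℝ)
    (hnonneg : ∀ τ : ℝ, 0 ≤ I τ)
    (hconv : ∀ x y t : ℝ, 0 ≤ t → t ≤ 1 →
      I (t * x + (1 - t) * y) ≤ (t : EReal) * I x + ((1 - t : ℝ) : EReal) * I y)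
    (hmono : ∀ x y : ℝ, x ≤ y → I y ≤ I x)
    (hlsc : LowerSemicontinuous I)
    (hinf : ∀ τ : ℝ, τ < τmin → I τ = ⊤)
    (hfin : ∀ τ : ℝ, τmin < τ → I τ < ⊤)
    (hzero : ∀ τ : ℝ, I τ = 0 ↔ τq ≤ τ)
    (τl : ℝ → ℝ)
    (hτl : ∀ l : ℝ, 0 < l → ((τl l : ℝ) : EReal) = ⨅ τ : ℝ, ((l * τ : ℝ) : EReal) + I τ) :
    Tendsto (fun l : ℝ => τl l / l) (nhdsWithin 0 (Set.Ioi 0)) (nhds τq) ∧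
    Tendsto (fun l : ℝ => τl l / l) atTop (nhds τmin) := by
  have hIq : I τq = 0 := (hzero τq).mpr le_rfl
  have hmq : τmin ≤ τq := by
    by_contra h
    push_neg at h
    have := hinf τq h
    rw [hIq] at this
    exact absurd this (by simp)
  -- generic upper bound via a test point
  have hub : ∀ l : ℝ, 0 < l → τl l ≤ l * τq := by
    intro l hl
    have h1 : ((τl l : ℝ) : EReal) ≤ ((l * τq : ℝ) : EReal) := by
      rw [hτl l hl]
      have := iInf_le (fun τ : ℝ => ((l * τ : ℝ) : EReal) + I τ) τq
      simpa [hIq] using this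
    exact_mod_cast h1
  -- generic lower bound
  have hlb : ∀ l b : ℝ, 0 < l →
      (∀ τ : ℝ, τmin ≤ τ → ((b : ℝ) : EReal) ≤ ((l * τ : ℝ) : EReal) + I τ) →
      b ≤ τl l := by
    intro l b hl h
    have h1 : ((b : ℝ) : EReal) ≤ ((τl l : ℝ) : EReal) := by
      rw [hτl l hl]
      refine le_iInf fun τ => ?_
      rcases le_or_gt τmin τ with hτ | hτ
      · exact h τ hτ
      · rw [hinf τ hτ]
        exact le_top.trans_eq rfl
    exact_mod_cast h1
  have hlbmin : ∀ l : ℝ, 0 < l → l * τmin ≤ τl l := by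
    intro l hl
    refine hlb l _ hl fun τ hτ => ?_
    calc ((l * τmin : ℝ) : EReal) ≤ ((l * τ : ℝ) : EReal) := by
          exact_mod_cast mul_le_mul_of_nonneg_left hτ hl.le
      _ ≤ ((l * τ : ℝ) : EReal) + I τ := le_add_of_nonneg_right (hnonneg τ)
  constructor
  · rw [Metric.tendsto_nhdsWithin_nhds]
    intro ε hε
    have hpos : (0 : EReal) < I (τq - ε / 2) := by
      refine lt_of_le_of_ne (hnonneg _) fun h => ?_
      have := (hzero _).mp h.symm
      linarith
    obtain ⟨c, hc0, hcle⟩ : ∃ c : ℝ, 0 < c ∧ (c : EReal) ≤ I (τq - ε / 2) := by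
      rcases eq_or_ne (I (τq - ε / 2)) ⊤ with h | h
      · exact ⟨1, one_pos, h ▸ le_top⟩
      · refine ⟨(I (τq - ε / 2)).toReal, ?_, ?_⟩
        · have hb : I (τq - ε / 2) ≠ ⊥ := ne_bot_of_le_ne_bot (by simp) (hnonneg _)
          have := EReal.coe_toReal h hb
          exact_mod_cast this ▸ hpos
        · have hb : I (τq - ε / 2) ≠ ⊥ := ne_bot_of_le_ne_bot (by simp) (hnonneg _)
          rw [EReal.coe_toReal h hb]
    set d : ℝ := τq - ε / 2 - τmin with hd
    refine ⟨c / (|d| + 1), by positivity, fun l hl hdist => ?_⟩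
    have hl0 : 0 < l := hl
    have hld : l < c / (|d| + 1) := by
      rwa [Real.dist_eq, sub_zero, abs_of_pos hl0] at hdist
    have hlow : l * (τq - ε / 2) ≤ τl l := by
      refine hlb l _ hl0 fun τ hτ => ?_
      rcases le_or_gt (τq - ε / 2) τ with hcase | hcase
      · calc ((l * (τq - ε / 2) : ℝ) : EReal) ≤ ((l * τ : ℝ) : EReal) := by
              exact_mod_cast mul_le_mul_of_nonneg_left hcase hl0.le
          _ ≤ _ := le_add_of_nonneg_right (hnonneg τ)
      · have hreal : l * (τq - ε / 2) ≤ l * τ + c := by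
          have h1 : l * (|d| + 1) < c := by
            rw [div_eq_mul_inv] at hld
            have := (lt_div_iff₀ (by positivity : (0:ℝ) < |d| + 1)).mp
              (by rw [div_eq_mul_inv]; exact hld)
            nlinarith [abs_nonneg d]
          have h2 : d ≤ |d| := le_abs_self d
          have hA := mul_le_mul_of_nonneg_left h2 hl0.le
          have hB := mul_le_mul_of_nonneg_left hτ hl0.le
          have hA' : l * (τq - ε / 2 - τmin) ≤ l * |d| := by rw [← hd]; exact hA
          nlinarith [hA', hB, h1, hl0]
        calc ((l * (τq - ε / 2) : ℝ) : EReal) ≤ ((l * τ + c : ℝ) : EReal) := by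
              exact_mod_cast hreal
          _ = ((l * τ : ℝ) : EReal) + (c : EReal) := by push_cast; rfl
          _ ≤ ((l * τ : ℝ) : EReal) + I τ :=
              add_le_add_right (hcle.trans (hmono τ (τq - ε / 2) hcase.le)) _
    have hupp := hub l hl0
    have h1 : τq - ε / 2 ≤ τl l / l := by
      rw [le_div_iff₀ hl0]; linarith [hlow]
    have h2 : τl l / l ≤ τq := by
      rw [div_le_iff₀ hl0]; linarith [hupp]
    rw [Real.dist_eq]
    rw [abs_lt]
    constructor <;> linarith
  · rw [Metric.tendsto_atTop]
    intro ε hε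
    set τb : ℝ := τmin + ε / 2 with hτb
    have hIτb : I τb < ⊤ := hfin _ (by simp [hτb]; linarith)
    have hbbot : I τb ≠ ⊥ := ne_bot_of_le_ne_bot (by simp) (hnonneg _)
    set C : ℝ := (I τb).toReal with hC
    have hCeq : (C : EReal) = I τb := EReal.coe_toReal hIτb.ne hbbot
    have hC0 : 0 ≤ C := by
      have := hnonneg τb
      rw [← hCeq] at this
      exact_mod_cast this
    refine ⟨max 1 (2 * C / ε + 1), fun l hl => ?_⟩
    have hl1 : (1 : ℝ) ≤ l := le_trans (le_max_left _ _) hl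
    have hl2 : 2 * C / ε + 1 ≤ l := le_trans (le_max_right _ _) hl
    have hl0 : 0 < l := by linarith
    have hupp : τl l ≤ l * τb + C := by
      have h1 : ((τl l : ℝ) : EReal) ≤ ((l * τb + C : ℝ) : EReal) := by
        rw [hτl l hl0]
        have := iInf_le (fun τ : ℝ => ((l * τ : ℝ) : EReal) + I τ) τb
        refine this.trans ?_
        rw [← hCeq]
        exact_mod_cast le_rfl
      exact_mod_cast h1
    have hlow := hlbmin l hl0
    have h1 : τmin ≤ τl l / l := by
      rw [le_div_iff₀ hl0]; linarith
    have h2 : τl l / l ≤ τb + C / l := by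
      rw [div_le_iff₀ hl0]
      have : (τb + C / l) * l = l * τb + C := by field_simp
      rw [this]; exact hupp
    have hCl : C / l < ε / 2 := by
      rw [div_lt_iff₀ hl0]
      have hεl : ε * (2 * C / ε) = 2 * C := by field_simp
      nlinarith
    rw [Real.dist_eq, abs_lt]
    simp only [hτb] at h2
    constructor <;> linarith
end

section
/- Suppose $I_{\mathbf{n}} : \mathbb{R} \to [0,\infty]$ is such that $I_{\mathbf{n}}(\tau) = \sup_{\lambda > 0}\{\tau^{\lambda}(\mathbf{n}) - \lambda\tau\}$, and suppose $\limsup_{\lambda \to 0^+} \frac{\tau^{\lambda}(\mathbf{n}) - \lambda \tau^q(\mathbf{n})}{\lambda^2} \ge -c$ for some $c \in (0,\infty)$. Then $\limsup_{r \to 0^+} \frac{I_{\mathbf{n}}(\tau^q(\mathbf{n}) - r)}{r^2} \ge \frac{1}{4c}$. -/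
open Filter

private lemma key_aux (τl : ℝ → ℝ) (τq : ℝ) (In : ℝ → EReal)
    (hIn : ∀ τ : ℝ, In τ = ⨆ l ∈ Set.Ioi (0 : ℝ), ((τl l - l * τ : ℝ) : EReal))
    (c : ℝ) (hc : 0 < c)
    (hlimsup : ((-c : ℝ) : EReal) ≤
      limsup (fun l : ℝ => (((τl l - l * τq) / l ^ 2 : ℝ) : EReal))
        (nhdsWithin 0 (Set.Ioi 0)))
    (ε : ℝ) (hε : 0 < ε) :
    ((1 / (4 * (c + ε)) : ℝ) : EReal) ≤
      limsup (fun r : ℝ => In (τq - r) * (((r ^ 2)⁻¹ : ℝ) : EReal))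
        (nhdsWithin 0 (Set.Ioi 0)) := by
  have hcε : 0 < c + ε := by linarith
  -- frequently the λ-bound holds
  have hfreq : ∃ᶠ l in nhdsWithin (0:ℝ) (Set.Ioi 0),
      ((-(c+ε) : ℝ) : EReal) < (((τl l - l * τq) / l ^ 2 : ℝ) : EReal) := by
    refine frequently_lt_of_lt_limsup ?_ (lt_of_lt_of_le ?_ hlimsup)
    · exact isCoboundedUnder_le_of_le _ (x := ⊥) (fun _ => bot_le)
    · exact_mod_cast (by linarith : -(c+ε) < -c)
  have hfreq2 : ∃ᶠ l in nhdsWithin (0:ℝ) (Set.Ioi 0),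
      (((-(c+ε) : ℝ) : EReal) < (((τl l - l * τq) / l ^ 2 : ℝ) : EReal)) ∧ l ∈ Set.Ioi (0:ℝ) :=
    hfreq.and_eventually self_mem_nhdsWithin
  -- the map λ ↦ 2(c+ε)λ preserves 𝓝[>] 0
  have hmap : Tendsto (fun l : ℝ => 2*(c+ε)*l) (nhdsWithin 0 (Set.Ioi 0))
      (nhdsWithin 0 (Set.Ioi 0)) := by
    apply tendsto_nhdsWithin_of_tendsto_nhds_of_eventually_within
    · have h1 : Tendsto (fun l : ℝ => 2*(c+ε)*l) (nhds 0) (nhds (2*(c+ε)*0)) :=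
        (tendsto_id.const_mul (2*(c+ε)))
      rw [mul_zero] at h1
      exact h1.mono_left nhdsWithin_le_nhds
    · filter_upwards [self_mem_nhdsWithin] with l hl
      exact mul_pos (by linarith : (0:ℝ) < 2*(c+ε)) hl
  apply le_limsup_of_frequently_le'
  apply hmap.frequently (hfreq2.mono ?_)
  rintro l ⟨hlt, hl⟩
  have hl0 : (0:ℝ) < l := hl
  have hsq : (0:ℝ) < l ^ 2 := by positivity
  have hlt' : -(c+ε) < (τl l - l * τq) / l ^ 2 := by exact_mod_cast hlt
  have hbase : -(c+ε) * l^2 < τl l - l * τq := by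
    rwa [← lt_div_iff₀ hsq]
  set r : ℝ := 2*(c+ε)*l with hr
  have hr0 : 0 < r := mul_pos (by linarith) hl0
  have hrsq : (0:ℝ) < r ^ 2 := by positivity
  -- real inequality
  have hreal : (1 / (4 * (c + ε)) : ℝ) ≤ (τl l - l * (τq - r)) * (r^2)⁻¹ := by
    have h1 : (c+ε) * l^2 ≤ τl l - l * (τq - r) := by
      have : τl l - l * (τq - r) = (τl l - l * τq) + l * r := by ring
      rw [this, hr]; nlinarith
    have h2 : (c+ε) * l^2 * (r^2)⁻¹ = 1 / (4 * (c + ε)) := by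
      rw [hr]
      field_simp
      ring
    rw [← h2]
    exact mul_le_mul_of_nonneg_right h1 (le_of_lt (by positivity))
  calc ((1 / (4 * (c + ε)) : ℝ) : EReal)
      ≤ (((τl l - l * (τq - r)) * (r^2)⁻¹ : ℝ) : EReal) := EReal.coe_le_coe_iff.2 hreal
    _ = ((τl l - l * (τq - r) : ℝ) : EReal) * (((r^2)⁻¹ : ℝ) : EReal) := EReal.coe_mul _ _
    _ ≤ In (τq - r) * (((r^2)⁻¹ : ℝ) : EReal) := by
        apply mul_le_mul_of_nonneg_right
        · rw [hIn]
          exact le_biSup (fun x : ℝ => ((τl x - x * (τq - r) : ℝ) : EReal)) hl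
        · exact_mod_cast le_of_lt (inv_pos.2 hrsq)

/-- Lemma `lem-dual-as-Itau`: if `I_n(τ) = sup_{λ>0} {τ^λ(n) - λτ}` and
`limsup_{λ→0⁺} (τ^λ(n) - λ τ^q(n))/λ² ≥ -c` with `c ∈ (0,∞)`, then
`limsup_{r→0⁺} I_n(τ^q(n) - r)/r² ≥ 1/(4c)`. -/
theorem stmt10 (τl : ℝ → ℝ) (τq : ℝ) (In : ℝ → EReal)
    (hIn : ∀ τ : ℝ, In τ = ⨆ l ∈ Set.Ioi (0 : ℝ), ((τl l - l * τ : ℝ) : EReal))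
    (c : ℝ) (hc : 0 < c)
    (hlimsup : ((-c : ℝ) : EReal) ≤
      limsup (fun l : ℝ => (((τl l - l * τq) / l ^ 2 : ℝ) : EReal))
        (nhdsWithin 0 (Set.Ioi 0))) :
    ((1 / (4 * c) : ℝ) : EReal) ≤
      limsup (fun r : ℝ => In (τq - r) * (((r ^ 2)⁻¹ : ℝ) : EReal))
        (nhdsWithin 0 (Set.Ioi 0)) := by
  set L := limsup (fun r : ℝ => In (τq - r) * (((r ^ 2)⁻¹ : ℝ) : EReal))
      (nhdsWithin (0:ℝ) (Set.Ioi 0)) with hL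
  apply le_of_forall_lt_imp_le_of_dense
  intro w hw
  obtain ⟨z, hwz, hz⟩ := EReal.exists_between_coe_real hw
  have hz' : z < 1 / (4 * c) := by exact_mod_cast hz
  rcases le_or_gt z 0 with hz0 | hz0
  · refine le_trans (le_of_lt hwz) (le_trans ?_ (key_aux τl τq In hIn c hc hlimsup 1 one_pos))
    exact EReal.coe_le_coe_iff.2 (le_trans hz0 (by positivity))
  · have h4c : 4 * c < 1 / z := by
      rw [lt_div_iff₀ hz0]
      calc 4 * c * z < 4 * c * (1 / (4*c)) := by
            apply mul_lt_mul_of_pos_left hz' (by positivity)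
        _ = 1 := by field_simp
    set ε : ℝ := (1/z - 4*c)/4 with hε
    have hε0 : 0 < ε := by rw [hε]; linarith
    have hval : 1 / (4 * (c + ε)) = z := by
      rw [hε]
      have : 4 * (c + (1/z - 4*c)/4) = 1/z := by ring
      rw [this]
      field_simp
    refine le_trans (le_of_lt hwz) (le_trans ?_ (key_aux τl τq In hIn c hc hlimsup ε hε0))
    exact EReal.coe_le_coe_iff.2 (le_of_eq hval.symm)
end
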